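/- arXiv:1810.07219 — 2 statements merged into one kernel-verified Lean document; each statement's English description precedes it below -/
import Mathlib

section
/- For positive integers m, n, k and nonnegative integers t₁,…,tₘ: P'(t₁,…,tₘ, k,k,…,k) ≡ P'(t₁,…,tₘ) · P'(k,k,…,k) (mod n), where the block k,…,k has n entries. -/
/-- Number of generalized derangements of disjoint sets of sizes `t 0, …, t (n-1)`:
permutations of the disjoint union mapping no element into its own set. -/
def gdCount (n : ℕ) (t : Fin n → ℕ) : ℕ :=
  Fintype.card {σ : Equiv.Perm (Σ i : Fin n, Fin (t i)) // ∀ x, (σ x).1 ≠ x.1}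

/-- Number of anagrams without fixed letters of the word with `t i` copies of letter `i`:
letter assignments to positions with the right letter counts and no position keeping
its original letter. -/
def aflCount (n : ℕ) (t : Fin n → ℕ) : ℕ :=
  Fintype.card {w : (Σ i : Fin n, Fin (t i)) → Fin n //
    (∀ j, (Finset.univ.filter fun x => w x = j).card = t j) ∧ ∀ x, w x ≠ x.1}

open Finset

set_option linter.unusedSectionVars false
set_option maxHeartbeats 1000000

open MulAction in
lemma card_dvd_of_free_zmod {α : Type} [Fintype α] {n : ℕ} [NeZero n] (f : ZMod n → α ≃ α)
    (hadd : ∀ a b x, f a (f b x) = f (a + b) x)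
    (hfree : ∀ a x, f a x = x → a = 0) : n ∣ Fintype.card α := by
  classical
  have h0 : ∀ x, f 0 x = x := fun x => by
    have := hadd 0 0 x
    rw [add_zero] at this
    exact (f 0).injective this
  letI : MulAction (Multiplicative (ZMod n)) α :=
    { smul := fun g x => f g.toAdd x
      one_smul := fun x => h0 x
      mul_smul := fun a b x => (hadd a.toAdd b.toAdd x).symm }
  letI : Fintype (orbitRel.Quotient (Multiplicative (ZMod n)) α) := Fintype.ofFinite _
  have hstab : ∀ x : α, stabilizer (Multiplicative (ZMod n)) x = ⊥ := by
    intro x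
    ext g
    simp only [mem_stabilizer_iff, Subgroup.mem_bot]
    constructor
    · intro h
      have := hfree g.toAdd x h
      exact Multiplicative.toAdd.injective this
    · rintro rfl; exact h0 x
  have := card_eq_sum_card_group_div_card_stabilizer (Multiplicative (ZMod n)) α
  rw [this]
  apply Finset.dvd_sum
  intro ω _
  have h1 : Fintype.card (stabilizer (Multiplicative (ZMod n)) ω.out) = 1 := by
    apply Fintype.card_eq_one_iff.mpr
    refine ⟨⟨1, Subgroup.one_mem _⟩, ?_⟩
    rintro ⟨g, hg⟩
    rw [hstab, Subgroup.mem_bot] at hg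
    exact Subtype.ext hg
  rw [h1]
  simp [ZMod.card]

/-- predicate: anagram without fixed letters with counts `t`. -/
def aflPred {L : Type} [Fintype L] [DecidableEq L] (t : L → ℕ)
    (w : (Σ i : L, Fin (t i)) → L) : Prop :=
  (∀ j, (Finset.univ.filter fun x => w x = j).card = t j) ∧ ∀ x, w x ≠ x.1

open Classical in
noncomputable def afl (L : Type) [Fintype L] [DecidableEq L] (t : L → ℕ) : ℕ :=
  Fintype.card {w : (Σ i : L, Fin (t i)) → L // aflPred t w}

lemma aflPred_transfer {L L' : Type} [Fintype L] [DecidableEq L] [Fintype L'] [DecidableEq L']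
    {t : L → ℕ} {t' : L' → ℕ} (e : L ≃ L')
    (pe : (Σ i : L, Fin (t i)) ≃ (Σ i : L', Fin (t' i)))
    (hpe : ∀ x, ((pe x).1 : L') = e x.1) (h : ∀ i, t' (e i) = t i)
    (w : (Σ i : L, Fin (t i)) → L) :
    aflPred t' (Equiv.arrowCongr pe e w) ↔ aflPred t w := by
  classical
  have key : ∀ j' : L', (Finset.univ.filter fun x' => Equiv.arrowCongr pe e w x' = j')
      = Finset.map pe.toEmbedding (Finset.univ.filter fun x => w x = e.symm j') := by
    intro j'
    ext x'
    simp only [Finset.mem_filter, Finset.mem_univ, true_and, Finset.mem_map_equiv,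
      Equiv.arrowCongr_apply, Function.comp_apply]
    rw [← Equiv.symm_apply_eq]
    simp
  constructor
  · rintro ⟨hc, hd⟩
    constructor
    · intro j
      have := hc (e j)
      rw [key, Finset.card_map] at this
      simpa [h j] using this
    · intro x
      have := hd (pe x)
      simp only [Equiv.arrowCongr_apply, Function.comp_apply, Equiv.symm_apply_apply] at this
      rw [hpe x] at this
      exact fun hcon => this (congrArg e hcon)
  · rintro ⟨hc, hd⟩
    constructor
    · intro j'
      rw [key, Finset.card_map, hc]
      have := h (e.symm j')
      rw [Equiv.apply_symm_apply] at this
      exact this.symm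
    · intro x'
      simp only [Equiv.arrowCongr_apply, Function.comp_apply]
      have h1 : x'.1 = e (pe.symm x').1 := by
        conv_lhs => rw [← Equiv.apply_symm_apply pe x']
        rw [hpe]
      rw [h1]
      exact fun hcon => hd _ (e.injective hcon)

lemma afl_congr {L L' : Type} [Fintype L] [DecidableEq L] [Fintype L'] [DecidableEq L']
    (e : L ≃ L') (t : L → ℕ) (t' : L' → ℕ) (h : ∀ i, t' (e i) = t i) :
    afl L t = afl L' t' := by
  classical
  apply Fintype.card_congr
  exact Equiv.subtypeEquiv (Equiv.arrowCongr (Equiv.sigmaCongr e fun i => finCongr (h i).symm) e)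
    (fun w => (aflPred_transfer e _ (by rintro ⟨i, a⟩; rfl) h w).symm)

section Core

variable (m n k : ℕ) [NeZero n] (t : Fin m → ℕ)


section Core

variable (m n k : ℕ) [NeZero n] (t : Fin m → ℕ)

abbrev BP := Σ s : Fin m ⊕ ZMod n, Fin (Sum.elim t (fun _ : ZMod n => k) s)

def ePos : BP m n k t ≃ (Σ i : Fin m, Fin (t i)) ⊕ (Σ _ : ZMod n, Fin k) where
  toFun x := match x with
    | ⟨.inl i, a⟩ => .inl ⟨i, a⟩
    | ⟨.inr i, a⟩ => .inr ⟨i, a⟩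
  invFun q := match q with
    | .inl ⟨i, a⟩ => ⟨.inl i, a⟩
    | .inr ⟨i, a⟩ => ⟨.inr i, a⟩
  left_inv := by rintro ⟨(i | i), a⟩ <;> rfl
  right_inv := by rintro (⟨i, a⟩ | ⟨i, a⟩) <;> rfl

def goodW (w : BP m n k t → Fin m ⊕ ZMod n) : Prop :=
  ∀ x, (w x).isLeft = x.1.isLeft

lemma card_subtype_split (pr : BP m n k t → Prop) [∀ x, Decidable (pr x)] :
    Fintype.card {x // pr x} =
      Fintype.card {a : Σ i : Fin m, Fin (t i) // pr ⟨.inl a.1, a.2⟩}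
      + Fintype.card {b : Σ _ : ZMod n, Fin k // pr ⟨.inr b.1, b.2⟩} := by
  rw [← Fintype.card_sum]
  apply Fintype.card_congr
  refine ((Equiv.subtypeEquiv (ePos m n k t) (q := fun q => pr ((ePos m n k t).symm q))
    fun a => by simp).trans Equiv.subtypeSum).trans
    (Equiv.sumCongr (Equiv.subtypeEquivRight fun a => ?_)
      (Equiv.subtypeEquivRight fun b => ?_))
  · rcases a with ⟨i, x⟩; exact Iff.rfl
  · rcases b with ⟨i, x⟩; exact Iff.rfl

def extractA (w : BP m n k t → Fin m ⊕ ZMod n) (hg : goodW m n k t w)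
    (x : Σ i : Fin m, Fin (t i)) : Fin m :=
  (w ⟨.inl x.1, x.2⟩).getLeft (by simpa using hg ⟨.inl x.1, x.2⟩)

def extractB (w : BP m n k t → Fin m ⊕ ZMod n) (hg : goodW m n k t w)
    (x : Σ _ : ZMod n, Fin k) : ZMod n :=
  (w ⟨.inr x.1, x.2⟩).getRight (by
    have := hg ⟨.inr x.1, x.2⟩
    simp only [Sum.isLeft_inr] at this
    simpa [Sum.isRight_iff, Sum.isLeft_iff] using this)

lemma extractA_eq_iff (w : BP m n k t → Fin m ⊕ ZMod n) (hg : goodW m n k t w)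
    (x : Σ i : Fin m, Fin (t i)) (j : Fin m) :
    extractA m n k t w hg x = j ↔ w ⟨.inl x.1, x.2⟩ = .inl j := by
  exact Sum.getLeft_eq_iff _

lemma extractB_eq_iff (w : BP m n k t → Fin m ⊕ ZMod n) (hg : goodW m n k t w)
    (x : Σ _ : ZMod n, Fin k) (j : ZMod n) :
    extractB m n k t w hg x = j ↔ w ⟨.inr x.1, x.2⟩ = .inr j := by
  simp [extractB]

lemma aflPred_extractA (w : BP m n k t → Fin m ⊕ ZMod n)
    (hw : aflPred (Sum.elim t fun _ => k) w) (hg : goodW m n k t w) :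
    aflPred t (extractA m n k t w hg) := by
  constructor
  · intro j
    have h0 := hw.1 (.inl j)
    rw [← Fintype.card_subtype] at h0 ⊢
    rw [show (Sum.elim t (fun _ : ZMod n => k) (Sum.inl j)) = t j from rfl,
      card_subtype_split m n k t (fun p => w p = .inl j)] at h0
    have hright : Fintype.card {b : Σ _ : ZMod n, Fin k // w ⟨.inr b.1, b.2⟩ = .inl j} = 0 := by
      rw [Fintype.card_eq_zero_iff]
      refine ⟨fun ⟨b, hb⟩ => ?_⟩
      have := hg ⟨.inr b.1, b.2⟩
      rw [hb] at this
      simp at this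
    rw [hright, add_zero] at h0
    rw [← h0]
    exact Fintype.card_congr (Equiv.subtypeEquivRight fun x => extractA_eq_iff m n k t w hg x j)
  · intro x hx
    rw [extractA_eq_iff] at hx
    exact hw.2 ⟨.inl x.1, x.2⟩ hx

lemma aflPred_extractB (w : BP m n k t → Fin m ⊕ ZMod n)
    (hw : aflPred (Sum.elim t fun _ => k) w) (hg : goodW m n k t w) :
    aflPred (fun _ : ZMod n => k) (extractB m n k t w hg) := by
  constructor
  · intro j
    have h0 := hw.1 (.inr j)
    rw [← Fintype.card_subtype] at h0 ⊢
    rw [show (Sum.elim t (fun _ : ZMod n => k) (Sum.inr j)) = k from rfl,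
      card_subtype_split m n k t (fun p => w p = .inr j)] at h0
    have hleft : Fintype.card {a : Σ i : Fin m, Fin (t i) // w ⟨.inl a.1, a.2⟩ = .inr j} = 0 := by
      rw [Fintype.card_eq_zero_iff]
      refine ⟨fun ⟨b, hb⟩ => ?_⟩
      have := hg ⟨.inl b.1, b.2⟩
      rw [hb] at this
      simp at this
    rw [hleft, zero_add] at h0
    exact (Fintype.card_congr
      (Equiv.subtypeEquivRight fun x => extractB_eq_iff m n k t w hg x j)).trans h0
  · intro x hx
    rw [extractB_eq_iff] at hx
    exact hw.2 ⟨.inr x.1, x.2⟩ hx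

def combine (wA : (Σ i : Fin m, Fin (t i)) → Fin m) (wB : (Σ _ : ZMod n, Fin k) → ZMod n) :
    BP m n k t → Fin m ⊕ ZMod n :=
  fun p => Sum.map wA wB (ePos m n k t p)

lemma goodW_combine (wA : (Σ i : Fin m, Fin (t i)) → Fin m)
    (wB : (Σ _ : ZMod n, Fin k) → ZMod n) : goodW m n k t (combine m n k t wA wB) := by
  rintro ⟨(i | i), a⟩ <;> rfl

lemma aflPred_combine (wA : (Σ i : Fin m, Fin (t i)) → Fin m)
    (wB : (Σ _ : ZMod n, Fin k) → ZMod n)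
    (hA : aflPred t wA) (hB : aflPred (fun _ : ZMod n => k) wB) :
    aflPred (Sum.elim t fun _ => k) (combine m n k t wA wB) := by
  constructor
  · intro j
    rw [← Fintype.card_subtype,
      card_subtype_split m n k t (fun p => combine m n k t wA wB p = j)]
    rcases j with j | j
    · have hright : Fintype.card
          {b : Σ _ : ZMod n, Fin k // combine m n k t wA wB ⟨.inr b.1, b.2⟩ = .inl j} = 0 := by
        rw [Fintype.card_eq_zero_iff]
        exact ⟨fun ⟨b, hb⟩ => by simp [combine, ePos] at hb⟩
      rw [hright, add_zero]
      have h1 := hA.1 j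
      rw [← Fintype.card_subtype] at h1
      refine Eq.trans (Fintype.card_congr (Equiv.subtypeEquivRight fun a => ?_)) h1
      show combine m n k t wA wB ⟨.inl a.1, a.2⟩ = .inl j ↔ _
      simp [combine, ePos]
    · have hleft : Fintype.card
          {a : Σ i : Fin m, Fin (t i) // combine m n k t wA wB ⟨.inl a.1, a.2⟩ = .inr j} = 0 := by
        rw [Fintype.card_eq_zero_iff]
        exact ⟨fun ⟨a, ha⟩ => by simp [combine, ePos] at ha⟩
      rw [hleft, zero_add]
      have h1 := hB.1 j
      rw [← Fintype.card_subtype] at h1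
      refine Eq.trans (Fintype.card_congr (Equiv.subtypeEquivRight fun b => ?_)) h1
      show combine m n k t wA wB ⟨.inr b.1, b.2⟩ = .inr j ↔ _
      simp [combine, ePos]
  · rintro ⟨(i | i), a⟩ h
    · exact hA.2 ⟨i, a⟩ (by simpa [combine, ePos] using h)
    · exact hB.2 ⟨i, a⟩ (by simpa [combine, ePos] using h)

-- NEW PART
def goodEquiv :
    {w : BP m n k t → Fin m ⊕ ZMod n // aflPred (Sum.elim t fun _ => k) w ∧ goodW m n k t w} ≃
      {wA : (Σ i : Fin m, Fin (t i)) → Fin m // aflPred t wA} ×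
      {wB : (Σ _ : ZMod n, Fin k) → ZMod n // aflPred (fun _ : ZMod n => k) wB} where
  toFun w :=
    (⟨extractA m n k t w.1 w.2.2, aflPred_extractA m n k t w.1 w.2.1 w.2.2⟩,
     ⟨extractB m n k t w.1 w.2.2, aflPred_extractB m n k t w.1 w.2.1 w.2.2⟩)
  invFun p :=
    ⟨combine m n k t p.1.1 p.2.1,
      aflPred_combine m n k t _ _ p.1.2 p.2.2, goodW_combine m n k t _ _⟩
  left_inv := by
    rintro ⟨w, hw, hg⟩
    apply Subtype.ext
    funext p
    rcases p with ⟨(i | i), a⟩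
    · show Sum.inl (extractA m n k t w hg ⟨i, a⟩) = w ⟨.inl i, a⟩
      exact Sum.inl_getLeft _ _
    · show Sum.inr (extractB m n k t w hg ⟨i, a⟩) = w ⟨.inr i, a⟩
      simp [extractB]
  right_inv := by
    rintro ⟨⟨wA, hA⟩, ⟨wB, hB⟩⟩
    refine Prod.ext (Subtype.ext ?_) (Subtype.ext ?_)
    · funext x
      rfl
    · funext x
      rfl

def shiftL (c : ZMod n) : (Fin m ⊕ ZMod n) ≃ (Fin m ⊕ ZMod n) :=
  Equiv.sumCongr (Equiv.refl _) (Equiv.addLeft c)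

lemma shiftL_inl (c : ZMod n) (i : Fin m) : shiftL m n c (.inl i) = .inl i := rfl
lemma shiftL_inr (c : ZMod n) (i : ZMod n) : shiftL m n c (.inr i) = .inr (c + i) := rfl

lemma shiftL_shiftL (a b : ZMod n) (s : Fin m ⊕ ZMod n) :
    shiftL m n a (shiftL m n b s) = shiftL m n (a + b) s := by
  rcases s with i | i
  · rfl
  · show (Sum.inr (a + (b + i)) : Fin m ⊕ ZMod n) = .inr (a + b + i)
    rw [add_assoc]

lemma shiftL_isLeft (c : ZMod n) (s : Fin m ⊕ ZMod n) :
    (shiftL m n c s).isLeft = s.isLeft := by rcases s with i | i <;> rfl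

def shiftPos (c : ZMod n) : BP m n k t ≃ BP m n k t where
  toFun x := match x with
    | ⟨.inl i, a⟩ => ⟨.inl i, a⟩
    | ⟨.inr i, a⟩ => ⟨.inr (c + i), a⟩
  invFun x := match x with
    | ⟨.inl i, a⟩ => ⟨.inl i, a⟩
    | ⟨.inr i, a⟩ => ⟨.inr (-c + i), a⟩
  left_inv := by
    rintro ⟨(i | i), a⟩
    · rfl
    · show (⟨.inr (-c + (c + i)), a⟩ : BP m n k t) = ⟨.inr i, a⟩
      rw [neg_add_cancel_left]
  right_inv := by
    rintro ⟨(i | i), a⟩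
    · rfl
    · show (⟨.inr (c + (-c + i)), a⟩ : BP m n k t) = ⟨.inr i, a⟩
      rw [add_neg_cancel_left]

lemma shiftPos_fst (c : ZMod n) (x : BP m n k t) :
    (shiftPos m n k t c x).1 = shiftL m n c x.1 := by
  rcases x with ⟨(i | i), a⟩ <;> rfl

lemma elim_shiftL (c : ZMod n) (s : Fin m ⊕ ZMod n) :
    Sum.elim t (fun _ : ZMod n => k) (shiftL m n c s) = Sum.elim t (fun _ : ZMod n => k) s := by
  rcases s with i | i <;> rfl

/-- the action of `c : ZMod n` on words -/
def actW (c : ZMod n) : (BP m n k t → Fin m ⊕ ZMod n) ≃ (BP m n k t → Fin m ⊕ ZMod n) :=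
  Equiv.arrowCongr (shiftPos m n k t c) (shiftL m n c)

lemma actW_apply (c : ZMod n) (w : BP m n k t → Fin m ⊕ ZMod n) (p : BP m n k t) :
    actW m n k t c w p = shiftL m n c (w ((shiftPos m n k t c).symm p)) := rfl

lemma shiftPos_symm_inl (c : ZMod n) (i : Fin m) (a : Fin (t i)) :
    (shiftPos m n k t c).symm ⟨.inl i, a⟩ = ⟨.inl i, a⟩ := rfl

lemma shiftPos_symm_inr (c : ZMod n) (i : ZMod n) (a : Fin k) :
    (shiftPos m n k t c).symm ⟨.inr i, a⟩ = ⟨.inr (-c + i), a⟩ := rfl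

lemma aflPred_actW (c : ZMod n) (w : BP m n k t → Fin m ⊕ ZMod n) :
    aflPred (Sum.elim t fun _ => k) (actW m n k t c w) ↔
      aflPred (Sum.elim t fun _ => k) w :=
  aflPred_transfer (shiftL m n c) (shiftPos m n k t c) (shiftPos_fst m n k t c)
    (elim_shiftL m n k t c) w

lemma goodW_actW (c : ZMod n) (w : BP m n k t → Fin m ⊕ ZMod n) :
    goodW m n k t (actW m n k t c w) ↔ goodW m n k t w := by
  constructor
  · intro hg x
    have := hg (shiftPos m n k t c x)
    rw [actW_apply, Equiv.symm_apply_apply, shiftL_isLeft, shiftPos_fst, shiftL_isLeft] at this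
    exact this
  · intro hg x
    rw [actW_apply, shiftL_isLeft, hg ((shiftPos m n k t c).symm x)]
    conv_rhs => rw [← Equiv.apply_symm_apply (shiftPos m n k t c) x]
    rw [shiftPos_fst, shiftL_isLeft]

lemma actW_actW (a b : ZMod n) (w : BP m n k t → Fin m ⊕ ZMod n) :
    actW m n k t a (actW m n k t b w) = actW m n k t (a + b) w := by
  funext p
  rcases p with ⟨(i | i), x⟩
  · simp only [actW_apply, shiftPos_symm_inl, shiftL_shiftL]
    rfl
  · simp only [actW_apply, shiftPos_symm_inr, shiftL_shiftL]
    congr 2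
    show (⟨.inr (-b + (-a + i)), x⟩ : BP m n k t) = ⟨.inr (-(a+b) + i), x⟩
    rw [show (-b + (-a + i)) = (-(a+b) + i) by ring]

lemma goodW_of_fixed (c : ZMod n) (hc : c ≠ 0) (w : BP m n k t → Fin m ⊕ ZMod n)
    (hw : aflPred (Sum.elim t fun _ => k) w) (hfix : actW m n k t c w = w) :
    goodW m n k t w := by
  classical
  -- Step 1: positions in the A-part take old letters
  have hA : ∀ (i : Fin m) (x : Fin (t i)), (w ⟨.inl i, x⟩).isLeft := by
    intro i x
    have h1 := congrFun hfix ⟨.inl i, x⟩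
    rw [actW_apply, shiftPos_symm_inl] at h1
    rcases hwp : w ⟨.inl i, x⟩ with j | j
    · rfl
    · rw [hwp, shiftL_inr] at h1
      obtain h2 : c + j = j := by simpa using h1
      exact absurd (by rwa [add_eq_right] at h2) hc
  -- Step 2: counting
  set R := univ.filter (fun p : BP m n k t => (w p).isRight) with hR
  set Bf := univ.filter (fun p : BP m n k t => p.1.isRight) with hBf
  have hsub : R ⊆ Bf := by
    intro p hp
    rw [hR, mem_filter] at hp
    rw [hBf, mem_filter]
    refine ⟨mem_univ _, ?_⟩
    rcases p with ⟨(i | i), x⟩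
    · have := hA i x
      rw [Sum.isLeft_iff] at this
      obtain ⟨y, hy⟩ := this
      rw [hy] at hp
      simp at hp
    · rfl
  have hcardB : Bf.card = n * k := by
    rw [hBf, ← Fintype.card_subtype,
      card_subtype_split m n k t (fun p => p.1.isRight)]
    have h1 : Fintype.card {a : Σ i : Fin m, Fin (t i) //
        ((⟨.inl a.1, a.2⟩ : BP m n k t)).1.isRight} = 0 := by
      rw [Fintype.card_eq_zero_iff]
      exact ⟨fun ⟨a, ha⟩ => by simp at ha⟩
    have h2 : Fintype.card {b : Σ _ : ZMod n, Fin k //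
        ((⟨.inr b.1, b.2⟩ : BP m n k t)).1.isRight} = n * k := by
      have e0 : {b : Σ _ : ZMod n, Fin k // ((⟨.inr b.1, b.2⟩ : BP m n k t)).1.isRight} ≃
          (Σ _ : ZMod n, Fin k) := Equiv.subtypeUnivEquiv (fun b => rfl)
      rw [Fintype.card_congr e0]
      simp [Fintype.card_sigma, ZMod.card]
    rw [h1, h2, zero_add]
  have hcardR : R.card = n * k := by
    rw [hR, Finset.card_eq_sum_card_fiberwise
      (f := fun p => ((w p).getRight?).getD 0) (t := univ) (fun x _ => mem_univ _)]
    have h1 : ∀ j : ZMod n, ((univ.filter (fun p : BP m n k t => (w p).isRight)).filter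
        (fun p => ((w p).getRight?).getD 0 = j)) = univ.filter (fun p => w p = .inr j) := by
      intro j
      ext p
      simp only [mem_filter, mem_univ, true_and, Finset.filter_filter]
      rcases hwp : w p with l | l <;> simp [hwp]
    have h2 : ∀ j : ZMod n, ((univ.filter (fun p : BP m n k t => (w p).isRight)).filter
        (fun p => ((w p).getRight?).getD 0 = j)).card = k := by
      intro j
      rw [h1 j]
      exact hw.1 (.inr j)
    rw [Finset.sum_congr rfl (fun j _ => h2 j)]
    simp [ZMod.card, mul_comm]
  have hRB : R = Bf := Finset.eq_of_subset_of_card_le hsub (by rw [hcardB, hcardR])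
  -- conclude goodness
  rintro ⟨(i | i), x⟩
  · have := hA i x
    rw [Sum.isLeft_iff] at this
    obtain ⟨y, hy⟩ := this
    rw [hy]; rfl
  · have hmem : (⟨.inr i, x⟩ : BP m n k t) ∈ Bf := by
      rw [hBf, mem_filter]; exact ⟨mem_univ _, rfl⟩
    rw [← hRB, hR, mem_filter] at hmem
    have := hmem.2
    rw [Sum.isRight_iff] at this
    obtain ⟨y, hy⟩ := this
    rw [hy]; rfl

open Classical in
lemma afl_core : afl (Fin m ⊕ ZMod n) (Sum.elim t fun _ => k) ≡
    afl (Fin m) t * afl (ZMod n) (fun _ => k) [MOD n] := by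
  classical
  have hsplit : afl (Fin m ⊕ ZMod n) (Sum.elim t fun _ => k) =
      Fintype.card {w : BP m n k t → Fin m ⊕ ZMod n //
        aflPred (Sum.elim t fun _ => k) w ∧ goodW m n k t w}
      + Fintype.card {w : BP m n k t → Fin m ⊕ ZMod n //
        aflPred (Sum.elim t fun _ => k) w ∧ ¬ goodW m n k t w} := by
    rw [← Fintype.card_sum]
    refine Fintype.card_congr ?_
    refine ((Equiv.sumCompl
      (p := fun w : {w : BP m n k t → Fin m ⊕ ZMod n //
        aflPred (Sum.elim t fun _ => k) w} => goodW m n k t w.1)).symm.trans ?_).symm.symm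
    exact Equiv.sumCongr
      (Equiv.subtypeSubtypeEquivSubtypeInter (fun w => aflPred (Sum.elim t fun _ => k) w)
        (fun w => goodW m n k t w))
      (Equiv.subtypeSubtypeEquivSubtypeInter (fun w => aflPred (Sum.elim t fun _ => k) w)
        (fun w => ¬ goodW m n k t w))
  have hgood : Fintype.card {w : BP m n k t → Fin m ⊕ ZMod n //
        aflPred (Sum.elim t fun _ => k) w ∧ goodW m n k t w}
      = afl (Fin m) t * afl (ZMod n) (fun _ => k) :=
    (Fintype.card_congr (goodEquiv m n k t)).trans (Fintype.card_prod _ _)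
  have hdvd : n ∣ Fintype.card {w : BP m n k t → Fin m ⊕ ZMod n //
      aflPred (Sum.elim t fun _ => k) w ∧ ¬ goodW m n k t w} := by
    apply card_dvd_of_free_zmod
      (f := fun c => Equiv.subtypeEquiv (actW m n k t c) (fun w =>
        and_congr (aflPred_actW m n k t c w).symm (not_congr (goodW_actW m n k t c w)).symm))
    · intro a b x
      apply Subtype.ext
      simp only [Equiv.subtypeEquiv_apply]
      exact actW_actW m n k t a b x.1
    · rintro c ⟨w, hw, hbad⟩ hfix
      by_contra hc
      apply hbad
      apply goodW_of_fixed m n k t c hc w hw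
      have := congrArg Subtype.val hfix
      simpa using this
  rw [hsplit, hgood]
  have h0 : Fintype.card {w : BP m n k t → Fin m ⊕ ZMod n //
      aflPred (Sum.elim t fun _ => k) w ∧ ¬ goodW m n k t w} ≡ 0 [MOD n] :=
    (Nat.modEq_zero_iff_dvd).mpr hdvd
  simpa using (Nat.ModEq.refl (afl (Fin m) t * afl (ZMod n) fun _ => k)).add h0

end Core

lemma aflCount_eq_afl (N : ℕ) (u : Fin N → ℕ) : aflCount N u = afl (Fin N) u := by
  classical
  exact Fintype.card_congr (Equiv.subtypeEquivRight fun w => Iff.rfl)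

theorem afl_block_congruence (m n k : ℕ) (hm : 1 ≤ m) (hn : 1 ≤ n) (hk : 1 ≤ k)
    (t : Fin m → ℕ) :
    aflCount (m + n) (Fin.append t (fun _ : Fin n => k)) ≡
      aflCount m t * aflCount n (fun _ => k) [MOD n] := by
  haveI : NeZero n := ⟨by omega⟩
  classical
  have e1 : afl (Fin m ⊕ ZMod n) (Sum.elim t fun _ => k) =
      afl (Fin (m + n)) (Fin.append t fun _ : Fin n => k) := by
    apply afl_congr ((Equiv.sumCongr (Equiv.refl (Fin m))
      (Fintype.equivFinOfCardEq (ZMod.card n))).trans finSumFinEquiv)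
    rintro (i | i)
    · simp [Fin.append_left]
    · simp [Fin.append_right]
  have e2 : afl (Fin n) (fun _ : Fin n => k) = afl (ZMod n) (fun _ => k) := by
    exact afl_congr (Fintype.equivFinOfCardEq (ZMod.card n)).symm _ _ (fun i => rfl)
  rw [aflCount_eq_afl, aflCount_eq_afl, aflCount_eq_afl, ← e1, e2]
  exact afl_core m n k t
end Core
end

section
/- For positive integers n, l, k, the number n divides P'(k,k,…,k) where the argument list consists of l·n + 1 copies of k. -/
/-- If a finite type carries a free action of `ZMod n`, then `n` divides its cardinality. -/
lemma dvd_card_of_free_action {X : Type*} [Fintype X] (n : ℕ) (hn : 0 < n)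
    (f : ZMod n → X → X)
    (hadd : ∀ a b x, f a (f b x) = f (a + b) x)
    (hzero : ∀ x, f 0 x = x)
    (hfree : ∀ a x, f a x = x → a = 0) :
    n ∣ Fintype.card X := by
  classical
  haveI : NeZero n := ⟨hn.ne'⟩
  let s : Setoid X := ⟨fun x y => ∃ a, f a x = y, by
    constructor
    · exact fun x => ⟨0, hzero x⟩
    · rintro x y ⟨a, rfl⟩; exact ⟨-a, by rw [hadd, neg_add_cancel, hzero]⟩
    · rintro x y z ⟨a, rfl⟩ ⟨b, rfl⟩; exact ⟨b + a, (hadd b a x).symm⟩⟩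
  have hfiber : ∀ q : Quotient s, Fintype.card {x // Quotient.mk s x = q} = n := by
    intro q
    let g : ZMod n → {x // Quotient.mk s x = q} := fun a =>
        ⟨f a q.out, by
          conv_rhs => rw [← Quotient.out_eq q]
          have hrel : s.r q.out (f a q.out) := ⟨a, rfl⟩
          exact (Quotient.sound hrel).symm⟩
    have hb : Function.Bijective g := by
      constructor
      · intro a b hab
        have h1 : f a q.out = f b q.out := congrArg Subtype.val hab
        have h2 : f (-b + a) q.out = q.out := by
          rw [← hadd, h1, hadd, neg_add_cancel, hzero]
        have := hfree _ _ h2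
        linear_combination (norm := ring_nf) this
      · rintro ⟨x, hx⟩
        have : s.r q.out x := Quotient.exact (by rw [Quotient.out_eq q, hx])
        obtain ⟨a, ha⟩ := this
        exact ⟨a, Subtype.ext ha⟩
    rw [← Fintype.card_of_bijective hb, ZMod.card]
  have : Fintype.card X = Fintype.card (Quotient s) * n := by
    rw [Fintype.card_congr (Equiv.sigmaFiberEquiv (Quotient.mk s)).symm,
        Fintype.card_sigma]
    simp [hfiber]
  exact ⟨_, by rw [this, mul_comm]⟩

theorem afl_divisibility (n l k : ℕ) (hn : 1 ≤ n) (hl : 1 ≤ l) (hk : 1 ≤ k) :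
    n ∣ aflCount (l * n + 1) (fun _ => k) := by
  classical
  haveI : NeZero n := ⟨by omega⟩
  set m := l * n + 1 with hm
  have hcard : Fintype.card (Fin m) = Fintype.card (Option (Fin l × ZMod n)) := by
    simp [ZMod.card, hm]
  let e : Fin m ≃ Option (Fin l × ZMod n) := Fintype.equivOfCardEq hcard
  let π : ZMod n → Equiv.Perm (Fin m) := fun a =>
    e.trans ((Equiv.optionCongr ((Equiv.refl (Fin l)).prodCongr (Equiv.addRight a))).trans e.symm)
  have hπ_apply : ∀ a i, π a i = e.symm ((e i).map fun p => (p.1, p.2 + a)) := by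
    intro a i
    simp [π, Equiv.optionCongr, Equiv.prodCongr, Equiv.addRight, Option.map_map]
    rfl
  have hπ_add : ∀ a b i, π a (π b i) = π (a + b) i := by
    intro a b i
    rw [hπ_apply, hπ_apply, hπ_apply, Equiv.apply_symm_apply, Option.map_map]
    cases e i with
    | none => rfl
    | some p =>
        simp [add_assoc]
        exact add_comm b a
  have hπ_zero : ∀ i, π 0 i = i := by
    intro i
    rw [hπ_apply]
    cases h : e i with
    | none => rw [← h]; simp
    | some p => simp; rw [← h]; simp
  have hπ_zero_symm : ∀ i, (π 0).symm i = i := fun i =>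
    (π 0).injective (by rw [Equiv.apply_symm_apply, hπ_zero])
  have hπ_symm_add : ∀ a b i, (π b).symm ((π a).symm i) = (π (a + b)).symm i := by
    intro a b i
    apply (π (a + b)).injective
    rw [Equiv.apply_symm_apply, ← hπ_add, Equiv.apply_symm_apply, Equiv.apply_symm_apply]
  have hπ_none : ∀ a, π a (e.symm none) = e.symm none := by
    intro a; rw [hπ_apply]; simp
  have hπ_fix : ∀ a i, π a i = i → a ≠ 0 → i = e.symm none := by
    intro a i hfix ha
    rw [hπ_apply] at hfix
    cases h : e i with
    | none => rw [← h]; simp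
    | some p =>
        exfalso
        rw [h] at hfix
        apply_fun e at hfix
        rw [Equiv.apply_symm_apply, h] at hfix
        simp at hfix
        exact ha (by linear_combination congrArg Prod.snd hfix)
  -- the induced permutation on positions
  let σ : ZMod n → Equiv.Perm (Σ i : Fin m, Fin k) := fun a =>
    ⟨fun p => ⟨π a p.1, p.2⟩, fun p => ⟨(π a).symm p.1, p.2⟩,
     fun p => by simp, fun p => by simp⟩
  have hσ_symm : ∀ (a : ZMod n) (x : Σ i : Fin m, Fin k),
      (σ a).symm x = ⟨(π a).symm x.1, x.2⟩ := fun _ _ => rfl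
  rw [aflCount]
  set X := {w : (Σ i : Fin m, Fin ((fun _ => k) i)) → Fin m //
    (∀ j, (Finset.univ.filter fun x => w x = j).card = (fun _ : Fin m => k) j) ∧
      ∀ x, w x ≠ x.1} with hX
  have key : ∀ (p : (Σ i : Fin m, Fin k) → Prop) [DecidablePred p]
      (τ : Equiv.Perm (Σ i : Fin m, Fin k)),
      (Finset.univ.filter fun x => p (τ x)).card = (Finset.univ.filter p).card := by
    intro p inst τ
    rw [← Fintype.card_subtype, ← Fintype.card_subtype]
    exact Fintype.card_congr (Equiv.subtypeEquiv τ fun _ => Iff.rfl)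
  let f : ZMod n → X → X := fun a w =>
    ⟨fun x => π a (w.1 ((σ a).symm x)), by
      constructor
      · intro j
        have h1 : (Finset.univ.filter fun x => π a (w.1 ((σ a).symm x)) = j).card
            = (Finset.univ.filter fun x => w.1 ((σ a).symm x) = (π a).symm j).card := by
          congr 1
          ext x
          simp [Equiv.apply_eq_iff_eq_symm_apply]
        rw [h1, key (fun y => w.1 y = (π a).symm j) (σ a).symm]
        exact w.2.1 ((π a).symm j)
      · intro x hx
        have h2 : w.1 ((σ a).symm x) = ((σ a).symm x).1 := by
          have : ((σ a).symm x).1 = (π a).symm x.1 := rfl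
          rw [this, Equiv.eq_symm_apply]
          exact hx
        exact w.2.2 _ h2⟩
  have hadd : ∀ a b w, f a (f b w) = f (a + b) w := by
    intro a b w
    apply Subtype.ext
    funext x
    show π a (π b (w.1 ((σ b).symm ((σ a).symm x)))) = π (a + b) (w.1 ((σ (a+b)).symm x))
    simp only [hσ_symm]
    rw [hπ_add, hπ_symm_add]
  have hzero : ∀ w, f 0 w = w := by
    intro w
    apply Subtype.ext
    funext x
    show π 0 (w.1 ((σ 0).symm x)) = w.1 x
    simp only [hσ_symm, hπ_zero, hπ_zero_symm]
  have hfree : ∀ a w, f a w = w → a = 0 := by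
    intro a w hfix
    by_contra ha
    let x0 : Σ i : Fin m, Fin k := ⟨e.symm none, ⟨0, by omega⟩⟩
    have h0 : (σ a).symm x0 = x0 := by
      rw [hσ_symm]
      have h : (π a).symm (e.symm none) = e.symm none :=
        (π a).injective (by rw [Equiv.apply_symm_apply, hπ_none])
      simp [x0, h]
    have h1 : π a (w.1 ((σ a).symm x0)) = w.1 x0 :=
      congrArg (fun u => u.1 x0) hfix
    rw [h0] at h1
    have h2 := hπ_fix a _ h1 ha
    exact w.2.2 x0 h2
  exact dvd_card_of_free_action n (by omega) f hadd hzero hfree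
end
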